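/- arXiv:1601.03329 — 4 statements merged into one kernel-verified Lean document; each statement's English description precedes it below -/
import Mathlib

section
/- Let n, m be positive integers, A, Q ∈ ℝ^{n×n}, B ∈ ℝ^{n×m}, N₁, …, N_n ∈ ℝ^{n×m}, and R ∈ ℝ^{m×m} invertible. Fix x, λ ∈ ℝ^n and write N(x) = Σ_{j=1}^n x_j N_j. Define Ã ∈ ℝ^{n×n} entrywise by Ã_{ij} = A_{ij} − [(N_j R⁻¹ (B + N(x))ᵀ + (B + N(x)) R⁻¹ N_jᵀ) λ]_i, and define G = B R⁻¹ Bᵀ − N(x) R⁻¹ N(x)ᵀ. Then: (i) Ã x − G λ = A x − (B + N(x)) R⁻¹ (B + N(x))ᵀ λ, and (ii) for every index i, [−Qx − Ãᵀλ]_i = −[Qx]_i − [Aᵀλ]_i + λᵀ (N_i R⁻¹ (B + N(x))ᵀ + (B + N(x)) R⁻¹ N_iᵀ) λ. -/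
open Matrix


private lemma sum_mulVec' {n m : ℕ} {ι : Type*} (s : Finset ι)
    (M : ι → Matrix (Fin n) (Fin m) ℝ) (v : Fin m → ℝ) :
    (∑ j ∈ s, M j) *ᵥ v = ∑ j ∈ s, (M j) *ᵥ v := by
  ext i
  simp only [Matrix.mulVec, dotProduct, Matrix.sum_apply, Finset.sum_apply, Finset.sum_mul]
  exact Finset.sum_comm

/-- The change of variables `Ã`, `G = B̃R⁻¹B̃ᵀ` rewrites the Pontryagin
state and co-state equations of the bilinear problem into canonical LQ form. -/
theorem stmt_2 {n m : ℕ}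
    (A Q : Matrix (Fin n) (Fin n) ℝ) (B : Matrix (Fin n) (Fin m) ℝ)
    (N : Fin n → Matrix (Fin n) (Fin m) ℝ)
    (R : Matrix (Fin m) (Fin m) ℝ) (hR : IsUnit R)
    (x lam : Fin n → ℝ)
    (Nx : Matrix (Fin n) (Fin m) ℝ) (hNx : Nx = ∑ j, x j • N j)
    (Atil : Matrix (Fin n) (Fin n) ℝ)
    (hA : ∀ i j, Atil i j =
      A i j - ((N j * R⁻¹ * (B + Nx)ᵀ + (B + Nx) * R⁻¹ * (N j)ᵀ) *ᵥ lam) i)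
    (G : Matrix (Fin n) (Fin n) ℝ)
    (hG : G = B * R⁻¹ * Bᵀ - Nx * R⁻¹ * Nxᵀ) :
    Atil *ᵥ x - G *ᵥ lam = A *ᵥ x - ((B + Nx) * R⁻¹ * (B + Nx)ᵀ) *ᵥ lam ∧
    ∀ i, (-(Q *ᵥ x) - Atilᵀ *ᵥ lam) i =
      -((Q *ᵥ x) i) - (Aᵀ *ᵥ lam) i +
        lam ⬝ᵥ ((N i * R⁻¹ * (B + Nx)ᵀ + (B + Nx) * R⁻¹ * (N i)ᵀ) *ᵥ lam) := by

  constructor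
  · have hD : Atil *ᵥ x = A *ᵥ x -
        ∑ j, x j • (((N j * R⁻¹ * (B + Nx)ᵀ + (B + Nx) * R⁻¹ * (N j)ᵀ)) *ᵥ lam) := by
      ext i
      simp only [mulVec, dotProduct, hA, sub_mul, Finset.sum_sub_distrib, Pi.sub_apply,
        Finset.sum_apply, Pi.smul_apply, smul_eq_mul]
      congr 1
      exact Finset.sum_congr rfl fun j _ => mul_comm _ _
    have hsum : ∑ j, x j • (((N j * R⁻¹ * (B + Nx)ᵀ + (B + Nx) * R⁻¹ * (N j)ᵀ)) *ᵥ lam)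
        = (Nx * R⁻¹ * (B + Nx)ᵀ + (B + Nx) * R⁻¹ * Nxᵀ) *ᵥ lam := by
      have hS : ∑ j, x j • (N j * R⁻¹ * (B + Nx)ᵀ + (B + Nx) * R⁻¹ * (N j)ᵀ)
          = Nx * R⁻¹ * (B + Nx)ᵀ + (B + Nx) * R⁻¹ * Nxᵀ := by
        simp only [smul_add]
        rw [Finset.sum_add_distrib]
        congr 1
        · calc ∑ j, x j • (N j * R⁻¹ * (B + Nx)ᵀ)
              = (∑ j, x j • N j) * R⁻¹ * (B + Nx)ᵀ := by
                rw [Matrix.sum_mul, Matrix.sum_mul]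
                exact Finset.sum_congr rfl fun j _ => by simp [Matrix.smul_mul]
            _ = Nx * R⁻¹ * (B + Nx)ᵀ := by rw [← hNx]
        · calc ∑ j, x j • ((B + Nx) * R⁻¹ * (N j)ᵀ)
              = (B + Nx) * R⁻¹ * (∑ j, x j • N j)ᵀ := by
                rw [Matrix.transpose_sum, Matrix.mul_sum]
                exact Finset.sum_congr rfl fun j _ => by simp [Matrix.mul_smul]
            _ = (B + Nx) * R⁻¹ * Nxᵀ := by rw [← hNx]
      rw [← hS, sum_mulVec']
      exact Finset.sum_congr rfl fun j _ => (Matrix.smul_mulVec _ _ _).symm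
    have hmat : (Nx * R⁻¹ * (B + Nx)ᵀ + (B + Nx) * R⁻¹ * Nxᵀ) + (B * R⁻¹ * Bᵀ - Nx * R⁻¹ * Nxᵀ)
        = (B + Nx) * R⁻¹ * (B + Nx)ᵀ := by
      simp only [Matrix.transpose_add, Matrix.add_mul, Matrix.mul_add]
      abel
    rw [hD, hsum, hG, sub_sub, ← Matrix.add_mulVec, hmat]
  · intro i
    simp only [Pi.sub_apply, Pi.neg_apply, mulVec, dotProduct, transpose_apply, hA,
      sub_mul, Finset.sum_sub_distrib, Finset.sum_mul, Finset.mul_sum]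
    have hc : ∀ a b : Fin n,
        (N i * R⁻¹ * (B + Nx)ᵀ + (B + Nx) * R⁻¹ * (N i)ᵀ) a b * lam b * lam a
        = lam a * (N i * R⁻¹ * (B + Nx)ᵀ + (B + Nx) * R⁻¹ * (N i)ᵀ) a b * lam b := by
      intro a b; ring
    simp only [hc]
    ring
end

section
/- Let t_f > 0, and let Ã, G, Q : [0, t_f] → ℝ^{n×n} be continuous. Suppose x, λ : [0, t_f] → ℝ^n are differentiable with ẋ(t) = Ã(t)x(t) − G(t)λ(t) and λ̇(t) = −Q(t)x(t) − Ã(t)ᵀλ(t) for all t ∈ [0, t_f]; suppose K : [0, t_f] → ℝ^{n×n} is differentiable and satisfies the Riccati equation K̇(t) = −Q(t) − Ã(t)ᵀK(t) − K(t)Ã(t) + K(t)G(t)K(t) with K(t_f) = 0; and suppose S : [0, t_f] → ℝ^{n×n} is differentiable with Ṡ(t) = −(Ã(t)ᵀ − K(t)G(t))S(t) and S(t_f) = I. Set ν = λ(t_f). Then λ(t) = K(t)x(t) + S(t)ν for all t ∈ [0, t_f]. -/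
open Matrix Set

/-- The sweep representation of the co-state: if `(x, λ)` solve the
canonical state/co-state equations, `K` solves the Riccati equation with
`K(t_f) = 0`, and `S` solves `Ṡ = −(Ãᵀ − KG)S` with `S(t_f) = I`, then with
`ν = λ(t_f)` one has `λ(t) = K(t)x(t) + S(t)ν` on `[0, t_f]`. -/
theorem stmt_3 {n : ℕ} (t_f : ℝ) (ht : 0 < t_f)
    (Atil G Q : ℝ → Matrix (Fin n) (Fin n) ℝ)
    (hAc : ContinuousOn Atil (Icc 0 t_f))
    (hGc : ContinuousOn G (Icc 0 t_f))
    (hQc : ContinuousOn Q (Icc 0 t_f))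
    (x lam : ℝ → (Fin n → ℝ))
    (hx : ∀ t ∈ Icc 0 t_f,
      HasDerivWithinAt x (Atil t *ᵥ x t - G t *ᵥ lam t) (Icc 0 t_f) t)
    (hlam : ∀ t ∈ Icc 0 t_f,
      HasDerivWithinAt lam (-(Q t *ᵥ x t) - (Atil t)ᵀ *ᵥ lam t) (Icc 0 t_f) t)
    (K : ℝ → Matrix (Fin n) (Fin n) ℝ)
    (hK : ∀ t ∈ Icc 0 t_f, ∀ i j,
      HasDerivWithinAt (fun s => K s i j)
        ((-Q t - (Atil t)ᵀ * K t - K t * Atil t + K t * G t * K t) i j)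
        (Icc 0 t_f) t)
    (hKf : K t_f = 0)
    (S : ℝ → Matrix (Fin n) (Fin n) ℝ)
    (hS : ∀ t ∈ Icc 0 t_f, ∀ i j,
      HasDerivWithinAt (fun s => S s i j)
        ((-(((Atil t)ᵀ - K t * G t) * S t)) i j) (Icc 0 t_f) t)
    (hSf : S t_f = 1) :
    ∀ t ∈ Icc 0 t_f, lam t = K t *ᵥ x t + S t *ᵥ lam t_f := by
  set ν : Fin n → ℝ := lam t_f with hν
  set e : ℝ → Fin n → ℝ := fun s => lam s - K s *ᵥ x s - S s *ᵥ ν with he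
  -- derivative of e within Icc
  have he_deriv : ∀ u ∈ Icc (0:ℝ) t_f,
      HasDerivWithinAt e ((-((Atil u)ᵀ - K u * G u)) *ᵥ e u) (Icc 0 t_f) u := by
    intro u hu
    have hxu := hx u hu
    have hKx : HasDerivWithinAt (fun s => K s *ᵥ x s)
        ((-Q u - (Atil u)ᵀ * K u - K u * Atil u + K u * G u * K u) *ᵥ x u
          + K u *ᵥ (Atil u *ᵥ x u - G u *ᵥ lam u)) (Icc 0 t_f) u := by
      rw [hasDerivWithinAt_pi]
      intro i
      have h1 : HasDerivWithinAt (fun s => ∑ j, K s i j * x s j)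
          (∑ j, ((-Q u - (Atil u)ᵀ * K u - K u * Atil u + K u * G u * K u) i j * x u j
                + K u i j * (Atil u *ᵥ x u - G u *ᵥ lam u) j)) (Icc 0 t_f) u :=
        HasDerivWithinAt.fun_sum fun j _ =>
          (hK u hu i j).mul ((hasDerivWithinAt_pi.mp hxu) j)
      refine h1.congr_deriv ?_
      simp [Matrix.mulVec, dotProduct, Finset.sum_add_distrib]
    have hSν : HasDerivWithinAt (fun s => S s *ᵥ ν)
        ((-(((Atil u)ᵀ - K u * G u) * S u)) *ᵥ ν) (Icc 0 t_f) u := by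
      rw [hasDerivWithinAt_pi]
      intro i
      have h1 : HasDerivWithinAt (fun s => ∑ j, S s i j * ν j)
          (∑ j, ((-(((Atil u)ᵀ - K u * G u) * S u)) i j * ν j)) (Icc 0 t_f) u :=
        HasDerivWithinAt.fun_sum fun j _ => (hS u hu i j).mul_const (ν j)
      exact h1
    have hder := ((hlam u hu).sub hKx).sub hSν
    refine hder.congr_deriv ?_
    simp only [he, Matrix.neg_mulVec, Matrix.mulVec_sub, Matrix.mulVec_add,
      Matrix.sub_mulVec, Matrix.add_mulVec, neg_mul, sub_mul,
      ← Matrix.mulVec_mulVec]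
    abel
  -- terminal condition
  have heb : e t_f = 0 := by
    simp [he, hKf, hSf, hν]
  -- continuity of K on Icc
  have hKcont : ContinuousOn K (Icc 0 t_f) := by
    rw [continuousOn_iff_continuous_restrict]
    refine continuous_matrix fun i j => ?_
    have : ContinuousOn (fun u => K u i j) (Icc 0 t_f) :=
      fun u hu => (hK u hu i j).continuousWithinAt
    exact this.restrict
  -- the clamp and the vector field
  set c : ℝ → ℝ := fun s => max 0 (min s t_f) with hc
  have hcmem : ∀ s, c s ∈ Icc (0:ℝ) t_f := fun s =>
    ⟨le_max_left _ _, max_le (le_of_lt ht) (min_le_right _ _)⟩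
  have hceq : ∀ s ∈ Icc (0:ℝ) t_f, c s = s := fun s hs => by
    simp [hc, min_eq_left hs.2, max_eq_right hs.1]
  set M : ℝ → Matrix (Fin n) (Fin n) ℝ :=
    fun s => -((Atil (c s))ᵀ - K (c s) * G (c s)) with hM
  set L : Matrix (Fin n) (Fin n) ℝ → ((Fin n → ℝ) →L[ℝ] (Fin n → ℝ)) :=
    fun A => LinearMap.toContinuousLinearMap (Matrix.mulVecLin A) with hL
  have hLapp : ∀ A (y : Fin n → ℝ), L A y = A *ᵥ y := fun A y => by
    simp [hL]
  have hLcont : Continuous L := by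
    have hLL : L = ⇑((Matrix.toLin'.trans LinearMap.toContinuousLinearMap).toLinearMap) := rfl
    rw [hLL]
    exact LinearMap.continuous_of_finiteDimensional _
  have hccont : Continuous c := continuous_const.max (continuous_id.min continuous_const)
  have hMcont : Continuous M := by
    refine Continuous.neg (Continuous.sub ?_ (Continuous.matrix_mul ?_ ?_))
    · exact (hAc.comp_continuous hccont hcmem).matrix_transpose
    · exact hKcont.comp_continuous hccont hcmem
    · exact hGc.comp_continuous hccont hcmem
  obtain ⟨C, hC⟩ := isCompact_Icc.exists_bound_of_continuousOn
    ((hLcont.comp hMcont).continuousOn : ContinuousOn (fun s => L (M s)) (Icc 0 t_f))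
  have hMC : ∀ s : ℝ, ‖L (M s)‖ ≤ C := by
    intro s
    have hMs : M s = M (c s) := by
      have : c (c s) = c s := hceq _ (hcmem s)
      simp [hM, this]
    rw [hMs]
    exact hC _ (hcmem s)
  have hlip : ∀ s : ℝ, LipschitzWith C.toNNReal (fun y => M s *ᵥ y) := by
    intro s
    have h1 : LipschitzWith ‖L (M s)‖₊ (L (M s)) := (L (M s)).lipschitz
    have h2 : ‖L (M s)‖₊ ≤ C.toNNReal := by
      rw [← norm_toNNReal]
      exact Real.toNNReal_mono (hMC s)
    have h3 := h1.weaken h2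
    have : (fun y => M s *ᵥ y) = ⇑(L (M s)) := by
      funext y; rw [hLapp]
    rwa [this]
  -- apply uniqueness
  have key := ODE_solution_unique_of_mem_Icc_left
    (v := fun t y => M t *ᵥ y) (s := fun _ => (univ : Set (Fin n → ℝ)))
    (K := C.toNNReal) (f := e) (g := fun _ => (0 : Fin n → ℝ)) (a := 0) (b := t_f)
    (fun t _ => (hlip t).lipschitzOnWith)
    (fun u hu => (he_deriv u hu).continuousWithinAt)
    ?_ (fun _ _ => trivial) continuousOn_const ?_ (fun _ _ => trivial) ?_
  · intro t ht0
    have h0 : e t = 0 := key ht0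
    have h1 : lam t - (K t *ᵥ x t + S t *ᵥ ν) = 0 := by
      rw [← sub_sub]; exact h0
    have := sub_eq_zero.mp h1
    simpa [hν] using this
  · intro u hu
    have h := he_deriv u ⟨hu.1.le, hu.2⟩
    have hmem : Icc (0:ℝ) t_f ∈ nhdsWithin u (Iic u) := by
      rw [mem_nhdsWithin]
      refine ⟨Ioi 0, isOpen_Ioi, hu.1, ?_⟩
      rintro v ⟨hv1, hv2⟩
      exact ⟨le_of_lt hv1, le_trans hv2 hu.2⟩
    have h2 := h.mono_of_mem_nhdsWithin hmem
    have hMu : M u = -((Atil u)ᵀ - K u * G u) := by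
      simp [hM, hceq u ⟨hu.1.le, hu.2⟩]
    simpa [hMu] using h2
  · intro u hu
    simpa [Matrix.mulVec_zero] using
      (hasDerivWithinAt_const u (Iic u) (0 : Fin n → ℝ))
  · exact heb
end

section
/- Let t_f > 0, ν ∈ ℝ^n, and let Ã, G, Q : [0, t_f] → ℝ^{n×n} be continuous with Q(t) and G(t) symmetric. Suppose K, S, P : [0, t_f] → ℝ^{n×n} are differentiable with K(t) symmetric for all t, K̇(t) = −Q(t) − Ã(t)ᵀK(t) − K(t)Ã(t) + K(t)G(t)K(t), Ṡ(t) = −(Ã(t)ᵀ − K(t)G(t))S(t), and Ṗ(t) = S(t)ᵀG(t)S(t). Define V : [0, t_f] × ℝ^n → ℝ by V(t, x) = (1/2)xᵀK(t)x + xᵀS(t)ν + (1/2)νᵀP(t)ν. Then for every t ∈ [0, t_f] and every x ∈ ℝ^n: ∂V/∂t(t,x) + (K(t)x + S(t)ν)ᵀ Ã(t) x + (1/2) xᵀQ(t)x − (1/2)(K(t)x + S(t)ν)ᵀ G(t) (K(t)x + S(t)ν) = 0, and moreover the gradient of V(t, ·) at x equals K(t)x + S(t)ν. -/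
open Matrix Set

lemma dot_mulVec_deriv {n : ℕ} {M : ℝ → Matrix (Fin n) (Fin n) ℝ}
    {M' : Matrix (Fin n) (Fin n) ℝ} {s : Set ℝ} {t : ℝ}
    (hM : ∀ i j, HasDerivWithinAt (fun τ => M τ i j) (M' i j) s t)
    (u v : Fin n → ℝ) :
    HasDerivWithinAt (fun τ => u ⬝ᵥ (M τ *ᵥ v)) (u ⬝ᵥ (M' *ᵥ v)) s t := by
  have key : HasDerivWithinAt (fun τ => ∑ i, ∑ j, u i * (M τ i j * v j))
      (∑ i, ∑ j, u i * (M' i j * v j)) s t :=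
    HasDerivWithinAt.fun_sum fun i _ =>
      HasDerivWithinAt.fun_sum fun j _ => ((hM i j).mul_const (v j)).const_mul (u i)
  have e : (fun τ => u ⬝ᵥ (M τ *ᵥ v)) = fun τ => ∑ i, ∑ j, u i * (M τ i j * v j) := by
    funext τ; simp [dotProduct, mulVec, Finset.mul_sum]
  rw [e]
  convert key using 1
  simp [dotProduct, mulVec, Finset.mul_sum]

lemma dot_transpose {n : ℕ} (M : Matrix (Fin n) (Fin n) ℝ) (u v : Fin n → ℝ) :
    u ⬝ᵥ (Mᵀ *ᵥ v) = v ⬝ᵥ (M *ᵥ u) := by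
  rw [mulVec_transpose, dotProduct_comm, dotProduct_mulVec]

lemma dot_symm {n : ℕ} {M : Matrix (Fin n) (Fin n) ℝ} (h : M.IsSymm)
    (u v : Fin n → ℝ) : u ⬝ᵥ (M *ᵥ v) = v ⬝ᵥ (M *ᵥ u) := by
  conv_lhs => rw [← h]
  exact dot_transpose M u v

/-- The quadratic value function
`V(t,x) = (1/2)xᵀK(t)x + xᵀS(t)ν + (1/2)νᵀP(t)ν` solves the HJB identity
`∂V/∂t + (Kx + Sν)ᵀÃx + (1/2)xᵀQx − (1/2)(Kx + Sν)ᵀG(Kx + Sν) = 0`, and its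
spatial gradient (directional derivative in every direction `h`) is
`(K(t)x + S(t)ν) ⬝ᵥ h`. -/
theorem stmt_9 {n : ℕ} (t_f : ℝ) (ht : 0 < t_f) (ν : Fin n → ℝ)
    (Atil G Q : ℝ → Matrix (Fin n) (Fin n) ℝ)
    (hAc : ContinuousOn Atil (Icc 0 t_f))
    (hGc : ContinuousOn G (Icc 0 t_f))
    (hQc : ContinuousOn Q (Icc 0 t_f))
    (hGsym : ∀ t ∈ Icc 0 t_f, (G t).IsSymm)
    (hQsym : ∀ t ∈ Icc 0 t_f, (Q t).IsSymm)
    (K S P : ℝ → Matrix (Fin n) (Fin n) ℝ)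
    (hKsym : ∀ t ∈ Icc 0 t_f, (K t).IsSymm)
    (hK : ∀ t ∈ Icc 0 t_f, ∀ i j,
      HasDerivWithinAt (fun s => K s i j)
        ((-Q t - (Atil t)ᵀ * K t - K t * Atil t + K t * G t * K t) i j)
        (Icc 0 t_f) t)
    (hS : ∀ t ∈ Icc 0 t_f, ∀ i j,
      HasDerivWithinAt (fun s => S s i j)
        ((-(((Atil t)ᵀ - K t * G t) * S t)) i j) (Icc 0 t_f) t)
    (hP : ∀ t ∈ Icc 0 t_f, ∀ i j,
      HasDerivWithinAt (fun s => P s i j)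
        (((S t)ᵀ * G t * S t) i j) (Icc 0 t_f) t)
    (V : ℝ → (Fin n → ℝ) → ℝ)
    (hV : ∀ t x, V t x =
      (1/2) * (x ⬝ᵥ (K t *ᵥ x)) + x ⬝ᵥ (S t *ᵥ ν) + (1/2) * (ν ⬝ᵥ (P t *ᵥ ν))) :
    ∀ t ∈ Icc 0 t_f, ∀ x : Fin n → ℝ,
      HasDerivWithinAt (fun s => V s x)
        (-((K t *ᵥ x + S t *ᵥ ν) ⬝ᵥ (Atil t *ᵥ x))
          - (1/2) * (x ⬝ᵥ (Q t *ᵥ x))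
          + (1/2) * ((K t *ᵥ x + S t *ᵥ ν) ⬝ᵥ (G t *ᵥ (K t *ᵥ x + S t *ᵥ ν))))
        (Icc 0 t_f) t ∧
      ∀ h : Fin n → ℝ,
        HasDerivAt (fun s : ℝ => V t (x + s • h))
          ((K t *ᵥ x + S t *ᵥ ν) ⬝ᵥ h) 0 := by
  intro t ht' x
  have hKs := hKsym t ht'
  have hGs := hGsym t ht'
  constructor
  · -- time derivative
    have hD : HasDerivWithinAt
        (fun s => (1/2) * (x ⬝ᵥ (K s *ᵥ x)) + x ⬝ᵥ (S s *ᵥ ν)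
          + (1/2) * (ν ⬝ᵥ (P s *ᵥ ν)))
        ((1/2) * (x ⬝ᵥ ((-Q t - (Atil t)ᵀ * K t - K t * Atil t + K t * G t * K t) *ᵥ x))
          + x ⬝ᵥ ((-(((Atil t)ᵀ - K t * G t) * S t)) *ᵥ ν)
          + (1/2) * (ν ⬝ᵥ (((S t)ᵀ * G t * S t) *ᵥ ν)))
        (Icc 0 t_f) t :=
      (((dot_mulVec_deriv (hK t ht') x x).const_mul (1/2)).add
        (dot_mulVec_deriv (hS t ht') x ν)).add
        ((dot_mulVec_deriv (hP t ht') ν ν).const_mul (1/2))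
    have e : (fun s => V s x) = fun s => (1/2) * (x ⬝ᵥ (K s *ᵥ x)) + x ⬝ᵥ (S s *ᵥ ν)
        + (1/2) * (ν ⬝ᵥ (P s *ᵥ ν)) := funext fun s => hV s x
    rw [e]
    convert hD using 1
    simp only [← mulVec_mulVec, Matrix.sub_mulVec, Matrix.add_mulVec, Matrix.neg_mulVec,
      mulVec_add, dotProduct_add, dotProduct_sub, dotProduct_neg, add_dotProduct,
      dot_transpose, dot_symm hKs, dot_symm hGs, dotProduct_comm]
    ring
  · -- spatial derivative
    intro h
    have e : (fun s : ℝ => V t (x + s • h))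
        = fun s : ℝ => ((1/2) * (h ⬝ᵥ (K t *ᵥ h))) * s ^ 2
            + ((K t *ᵥ x + S t *ᵥ ν) ⬝ᵥ h) * s + V t x := by
      funext s
      simp only [hV, mulVec_add, mulVec_smul, dotProduct_add, add_dotProduct,
        dotProduct_smul, smul_dotProduct, smul_eq_mul, dot_symm hKs, dotProduct_comm]
      ring
    rw [e]
    have h1 : HasDerivAt (fun s : ℝ => ((1/2) * (h ⬝ᵥ (K t *ᵥ h))) * s ^ 2)
        (((1/2) * (h ⬝ᵥ (K t *ᵥ h))) * ((2 : ℕ) * (0:ℝ) ^ 1)) 0 :=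
      (hasDerivAt_pow 2 0).const_mul _
    have h2 : HasDerivAt (fun s : ℝ => ((K t *ᵥ x + S t *ᵥ ν) ⬝ᵥ h) * s)
        ((K t *ᵥ x + S t *ᵥ ν) ⬝ᵥ h) 0 := by
      simpa using (hasDerivAt_id (0:ℝ)).const_mul ((K t *ᵥ x + S t *ᵥ ν) ⬝ᵥ h)
    have := (h1.add h2).add_const (V t x)
    refine this.congr_deriv ?_
    ring
end

section
/- Let t_f > 0, let Ã : [0, t_f] → ℝ^{n×n} and B : [0, t_f] → ℝ^{n×m} be continuous, and R ∈ ℝ^{m×m} symmetric positive definite; set G(t) = B(t)R⁻¹B(t)ᵀ. Let Ψ : [0, t_f] → ℝ^{n×n} be differentiable with Ψ̇(t) = −Ψ(t)Ã(t), Ψ(0) = I, and Ψ(t) invertible for all t. Define S(t) = (Ψ(t_f)⁻¹Ψ(t))ᵀ, let P : [0, t_f] → ℝ^{n×n} be differentiable with Ṗ(t) = S(t)ᵀG(t)S(t) and P(t_f) = 0, and set W = ∫_0^{t_f} Ψ(σ)G(σ)Ψ(σ)ᵀ dσ. Then: (i) P(0) = −Ψ(t_f)⁻¹ W (Ψ(t_f)⁻¹)ᵀ,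 so P(0) is invertible whenever W is; and (ii) if W is invertible, then with ν = P(0)⁻¹(x_f − S(0)ᵀx_0) and ξ = Ψ(t_f)x_f − x_0, one has −R⁻¹B(t)ᵀS(t)ν = R⁻¹B(t)ᵀΨ(t)ᵀW⁻¹ξ for every t ∈ [0, t_f]. -/
open Matrix Set

set_option maxHeartbeats 1600000

/-- In the minimum-energy case, `P(0) = −Ψ(t_f)⁻¹ W (Ψ(t_f)⁻¹)ᵀ`
(so `P(0)` is invertible whenever the Gramian `W` is), and the closed-loop
expression `−R⁻¹B(t)ᵀS(t)ν` of the minimum-energy control coincides with the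
open-loop Gramian expression `R⁻¹B(t)ᵀΨ(t)ᵀW⁻¹ξ`. -/
theorem stmt_13 {n m : ℕ} (t_f : ℝ) (ht : 0 < t_f)
    (Atil : ℝ → Matrix (Fin n) (Fin n) ℝ)
    (B : ℝ → Matrix (Fin n) (Fin m) ℝ)
    (hA : ContinuousOn Atil (Icc 0 t_f))
    (hB : ContinuousOn B (Icc 0 t_f))
    (R : Matrix (Fin m) (Fin m) ℝ) (hR : R.PosDef)
    (G : ℝ → Matrix (Fin n) (Fin n) ℝ)
    (hG : G = fun t => B t * R⁻¹ * (B t)ᵀ)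
    (Ψ : ℝ → Matrix (Fin n) (Fin n) ℝ)
    (hΨ : ∀ t ∈ Icc 0 t_f, ∀ i j,
      HasDerivWithinAt (fun s => Ψ s i j)
        ((-(Ψ t * Atil t)) i j) (Icc 0 t_f) t)
    (hΨ0 : Ψ 0 = 1) (hΨinv : ∀ t ∈ Icc 0 t_f, IsUnit (Ψ t))
    (S : ℝ → Matrix (Fin n) (Fin n) ℝ)
    (hS : S = fun t => ((Ψ t_f)⁻¹ * Ψ t)ᵀ)
    (P : ℝ → Matrix (Fin n) (Fin n) ℝ)
    (hP : ∀ t ∈ Icc 0 t_f, ∀ i j,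
      HasDerivWithinAt (fun s => P s i j)
        (((S t)ᵀ * G t * S t) i j) (Icc 0 t_f) t)
    (hPf : P t_f = 0)
    (W : Matrix (Fin n) (Fin n) ℝ)
    (hW : W = Matrix.of fun i j =>
      ∫ σ in (0:ℝ)..t_f, (Ψ σ * G σ * (Ψ σ)ᵀ) i j)
    (x₀ x_f : Fin n → ℝ) :
    P 0 = -((Ψ t_f)⁻¹ * W * ((Ψ t_f)⁻¹)ᵀ) ∧
    (IsUnit W → IsUnit (P 0)) ∧
    (IsUnit W →
      ∀ t ∈ Icc 0 t_f,
        -((R⁻¹ * (B t)ᵀ * S t) *ᵥ ((P 0)⁻¹ *ᵥ (x_f - (S 0)ᵀ *ᵥ x₀))) =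
          (R⁻¹ * (B t)ᵀ * (Ψ t)ᵀ * W⁻¹) *ᵥ (Ψ t_f *ᵥ x_f - x₀)) := by
  have htmem : t_f ∈ Icc (0:ℝ) t_f := ⟨le_of_lt ht, le_refl _⟩
  have h0mem : (0:ℝ) ∈ Icc (0:ℝ) t_f := ⟨le_refl _, le_of_lt ht⟩
  have hΨfd : IsUnit (Ψ t_f).det := (Matrix.isUnit_iff_isUnit_det _).1 (hΨinv t_f htmem)
  -- continuity of Ψ
  have hΨC : ContinuousOn Ψ (Icc 0 t_f) :=
    continuousOn_pi.2 fun i => continuousOn_pi.2 fun j =>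
      fun t htm => (hΨ t htm i j).continuousWithinAt
  have hGC : ContinuousOn G (Icc 0 t_f) := by
    rw [hG]
    exact ((continuous_id.matrix_mul continuous_const).matrix_mul
      continuous_id.matrix_transpose).comp_continuousOn hB
  set M : ℝ → Matrix (Fin n) (Fin n) ℝ := fun σ => Ψ σ * G σ * (Ψ σ)ᵀ with hM
  have hMC : ContinuousOn M (Icc 0 t_f) :=
    (hΨC.mul hGC).mul ((continuous_id.matrix_transpose).comp_continuousOn hΨC)
  have hMij : ∀ i j, ContinuousOn (fun σ => M σ i j) (Icc 0 t_f) := by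
    intro i j
    have h1 : ContinuousOn (fun σ => M σ i) (Icc 0 t_f) :=
      (continuous_apply i).comp_continuousOn hMC
    exact (continuous_apply j).comp_continuousOn h1
  -- derivative rewriting : SᵀGS = Ψf⁻¹ M Ψf⁻ᵀ
  have hD : ∀ t, (S t)ᵀ * G t * S t = (Ψ t_f)⁻¹ * M t * ((Ψ t_f)⁻¹)ᵀ := by
    intro t
    rw [hS]
    simp only [Matrix.transpose_transpose, Matrix.transpose_mul, hM]
    noncomm_ring
  -- FTC entrywise
  have key : P 0 = -((Ψ t_f)⁻¹ * W * ((Ψ t_f)⁻¹)ᵀ) := by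
    have hint : ∀ i j, IntervalIntegrable
        (fun σ => ((Ψ t_f)⁻¹ * M σ * ((Ψ t_f)⁻¹)ᵀ) i j) MeasureTheory.volume 0 t_f := by
      intro i j
      apply ContinuousOn.intervalIntegrable
      rw [uIcc_of_le ht.le]
      have : ContinuousOn (fun σ => (Ψ t_f)⁻¹ * M σ * ((Ψ t_f)⁻¹)ᵀ) (Icc 0 t_f) :=
        ((continuous_const.matrix_mul continuous_id).matrix_mul
          continuous_const).comp_continuousOn hMC
      exact ((continuous_apply j).comp (continuous_apply i)).comp_continuousOn this
    have hftc : ∀ i j, (∫ σ in (0:ℝ)..t_f, ((Ψ t_f)⁻¹ * M σ * ((Ψ t_f)⁻¹)ᵀ) i j)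
        = P t_f i j - P 0 i j := by
      intro i j
      apply intervalIntegral.integral_eq_sub_of_hasDeriv_right_of_le ht.le
      · intro t htm
        exact (hP t htm i j).continuousWithinAt
      · intro t htm
        have htm' : t ∈ Icc (0:ℝ) t_f := Ioo_subset_Icc_self htm
        have := (hP t htm' i j).hasDerivAt (Icc_mem_nhds htm.1 htm.2)
        rw [hD t] at this
        exact this.hasDerivWithinAt
      · exact hint i j
    -- move constants out of the integral
    have hWint : ∀ k l, IntervalIntegrable (fun σ => M σ k l) MeasureTheory.volume 0 t_f := by
      intro k l
      apply ContinuousOn.intervalIntegrable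
      rw [uIcc_of_le ht.le]
      exact hMij k l
    have hsplit : ∀ i j, (∫ σ in (0:ℝ)..t_f, ((Ψ t_f)⁻¹ * M σ * ((Ψ t_f)⁻¹)ᵀ) i j)
        = ((Ψ t_f)⁻¹ * W * ((Ψ t_f)⁻¹)ᵀ) i j := by
      intro i j
      have expand : ∀ σ, ((Ψ t_f)⁻¹ * M σ * ((Ψ t_f)⁻¹)ᵀ) i j
          = ∑ l, (∑ k, (Ψ t_f)⁻¹ i k * M σ k l) * ((Ψ t_f)⁻¹)ᵀ l j := by
        intro σ
        simp [Matrix.mul_apply]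
      simp only [expand]
      rw [intervalIntegral.integral_finset_sum]
      · have : ∀ l, (∫ σ in (0:ℝ)..t_f, (∑ k, (Ψ t_f)⁻¹ i k * M σ k l) * ((Ψ t_f)⁻¹)ᵀ l j)
            = (∑ k, (Ψ t_f)⁻¹ i k * W k l) * ((Ψ t_f)⁻¹)ᵀ l j := by
          intro l
          rw [intervalIntegral.integral_mul_const, intervalIntegral.integral_finset_sum]
          · congr 1
            refine Finset.sum_congr rfl fun k _ => ?_
            rw [intervalIntegral.integral_const_mul]
            rw [hW]
            rfl
          · exact fun k _ => (hWint k l).const_mul _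
        rw [Finset.sum_congr rfl fun l _ => this l]
        simp [Matrix.mul_apply]
      · intro l _
        apply ContinuousOn.intervalIntegrable
        rw [uIcc_of_le ht.le]
        exact (continuousOn_finset_sum _ fun k _ =>
          continuousOn_const.mul (hMij k l)).mul continuousOn_const
    ext i j
    have := hftc i j
    rw [hsplit i j] at this
    simp only [hPf, Matrix.zero_apply, zero_sub] at this
    rw [Matrix.neg_apply, this, neg_neg]
  refine ⟨key, ?_, ?_⟩
  · intro hWu
    rw [key]
    have h1 : IsUnit ((Ψ t_f)⁻¹) :=
      isUnit_iff_exists.2 ⟨Ψ t_f, Matrix.nonsing_inv_mul _ hΨfd, Matrix.mul_nonsing_inv _ hΨfd⟩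
    have h2 : IsUnit (((Ψ t_f)⁻¹)ᵀ) := by
      rwa [Matrix.isUnit_iff_isUnit_det, Matrix.det_transpose, ← Matrix.isUnit_iff_isUnit_det]
    have : IsUnit ((Ψ t_f)⁻¹ * W * ((Ψ t_f)⁻¹)ᵀ) := (h1.mul hWu).mul h2
    exact this.neg
  · intro hWu t htm
    have hWd : IsUnit W.det := (Matrix.isUnit_iff_isUnit_det _).1 hWu
    -- inverse of P 0
    have hΨftd : IsUnit ((Ψ t_f)ᵀ).det := by
      rw [Matrix.det_transpose]; exact hΨfd
    have hPinv : (P 0)⁻¹ = -((Ψ t_f)ᵀ * W⁻¹ * Ψ t_f) := by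
      apply Matrix.inv_eq_right_inv
      rw [key, Matrix.neg_mul, Matrix.mul_neg, neg_neg]
      simp only [Matrix.mul_assoc]
      rw [Matrix.transpose_nonsing_inv,
        Matrix.nonsing_inv_mul_cancel_left _ _ hΨftd,
        Matrix.mul_nonsing_inv_cancel_left _ _ hWd,
        Matrix.nonsing_inv_mul _ hΨfd]
    have hS0 : (S 0)ᵀ = (Ψ t_f)⁻¹ := by
      rw [hS]; simp [hΨ0]
    have hmat : -(R⁻¹ * (B t)ᵀ * S t * (P 0)⁻¹)
        = R⁻¹ * (B t)ᵀ * (Ψ t)ᵀ * W⁻¹ * Ψ t_f := by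
      rw [hPinv, hS]
      simp only [Matrix.transpose_mul, Matrix.transpose_transpose]
      rw [Matrix.mul_neg, neg_neg]
      simp only [Matrix.mul_assoc]
      rw [Matrix.transpose_nonsing_inv,
        Matrix.nonsing_inv_mul_cancel_left _ _ hΨftd]
    have hvec : Ψ t_f *ᵥ (x_f - (Ψ t_f)⁻¹ *ᵥ x₀) = Ψ t_f *ᵥ x_f - x₀ := by
      rw [Matrix.mulVec_sub, Matrix.mulVec_mulVec, Matrix.mul_nonsing_inv _ hΨfd,
        Matrix.one_mulVec]
    rw [hS0]
    calc -((R⁻¹ * (B t)ᵀ * S t) *ᵥ ((P 0)⁻¹ *ᵥ (x_f - (Ψ t_f)⁻¹ *ᵥ x₀)))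
        = (-(R⁻¹ * (B t)ᵀ * S t * (P 0)⁻¹)) *ᵥ (x_f - (Ψ t_f)⁻¹ *ᵥ x₀) := by
          rw [Matrix.mulVec_mulVec, Matrix.neg_mulVec]
      _ = (R⁻¹ * (B t)ᵀ * (Ψ t)ᵀ * W⁻¹ * Ψ t_f) *ᵥ (x_f - (Ψ t_f)⁻¹ *ᵥ x₀) := by
          rw [hmat]
      _ = (R⁻¹ * (B t)ᵀ * (Ψ t)ᵀ * W⁻¹) *ᵥ (Ψ t_f *ᵥ x_f - x₀) := by
          rw [← hvec, ← Matrix.mulVec_mulVec]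
end
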